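/- Let F be a field, λ ∈ P(d) and μ ∈ Λ(d). Then the permutation-module Hom space satisfies: k_{𝔖_μ} ⊗_{k𝔖_μ} k𝔖_d · y_λ = 0 unless μ ⊴ λ' in the dominance order, and for μ = λ' the space k_{𝔖_{λ'}} ⊗_{k𝔖_{λ'}} k𝔖_d · y_λ is one-dimensional. -/

import Mathlib

open Finset
open scoped Classical

noncomputable section

/-- The partial sum `c 0 + ⋯ + c (s-1)` of a composition `c`. -/
def psum (c : ℕ → ℕ) (s : ℕ) : ℕ := ∑ r ∈ Finset.range s, c r

/-- `c` is a composition of `d` with (at most) `n` parts. -/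
def IsComposition (n : ℕ) (c : ℕ → ℕ) (d : ℕ) : Prop :=
  (∀ s, n ≤ s → c s = 0) ∧ psum c n = d

/-- `c` is a partition of `d` with at most `n` parts. -/
def IsPartitionC (n : ℕ) (c : ℕ → ℕ) (d : ℕ) : Prop :=
  IsComposition n c d ∧ ∀ s t, s ≤ t → c t ≤ c s

/-- The transposed partition: `(transp n c) i = #{s < n | c s > i}`. -/
def transp (n : ℕ) (c : ℕ → ℕ) : ℕ → ℕ := fun i =>
  ((Finset.range n).filter fun s => i < c s).card

/-- The dominance order: `Dominates c c'` means `c ⊴ c'`. -/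
def Dominates (c c' : ℕ → ℕ) : Prop :=
  ∀ t, ∑ s ∈ Finset.range t, c s ≤ ∑ s ∈ Finset.range t, c' s

/-- The block index ("color") of the position `i` for the composition `c` with
`n` parts: position `i` lies in the `colorOf n c i`-th block. -/
def colorOf (n : ℕ) (c : ℕ → ℕ) (i : ℕ) : ℕ :=
  ((Finset.range n).filter fun s => psum c (s + 1) ≤ i).card

/-- The Young (standard parabolic) subgroup `𝔖_c ≤ 𝔖_d` of the composition `c`:
the stabilizer of the block coloring. -/
def young (n : ℕ) (c : ℕ → ℕ) (d : ℕ) : Subgroup (Equiv.Perm (Fin d)) where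
  carrier := {g | ∀ i : Fin d, colorOf n c (g i) = colorOf n c i}
  one_mem' := fun _ => rfl
  mul_mem' := by
    intro a b ha hb i
    simpa [Equiv.Perm.mul_apply] using (ha (b i)).trans (hb i)
  inv_mem' := by
    intro a ha i
    simpa using (ha (a⁻¹ i)).symm

/-- The Coxeter length of a permutation (number of inversions). -/
def lenPerm (d : ℕ) (w : Equiv.Perm (Fin d)) : ℕ :=
  (Finset.univ.filter fun p : Fin d × Fin d => p.1 < p.2 ∧ w p.2 < w p.1).card

/-- `g` is the minimal-length representative of its double coset
`𝔖_{cl} g 𝔖_{cr}` (an element of `^{cl}𝒟^{cr}`). -/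
def IsMinDC (d : ℕ) (nl : ℕ) (cl : ℕ → ℕ) (nr : ℕ) (cr : ℕ → ℕ)
    (g : Equiv.Perm (Fin d)) : Prop :=
  ∀ a ∈ young nl cl d, ∀ b ∈ young nr cr d, lenPerm d g ≤ lenPerm d (a * g * b)

/-- `g` is the minimal-length representative of its coset `𝔖_c g`
(an element of `^{c}𝒟`). -/
def IsMinL (d : ℕ) (n : ℕ) (c : ℕ → ℕ) (g : Equiv.Perm (Fin d)) : Prop :=
  ∀ h ∈ young n c d, lenPerm d g ≤ lenPerm d (h * g)

/-- `x_c = ∑_{g ∈ 𝔖_c} g` in the group algebra `k𝔖_d`. -/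
def xEl (k : Type) [CommRing k] (n : ℕ) (c : ℕ → ℕ) (d : ℕ) :
    MonoidAlgebra k (Equiv.Perm (Fin d)) :=
  ∑ g ∈ Finset.univ.filter fun g => g ∈ young n c d,
    MonoidAlgebra.of k (Equiv.Perm (Fin d)) g

/-- `y_c = ∑_{g ∈ 𝔖_c} sgn(g) g` in the group algebra `k𝔖_d`. -/
def yEl (k : Type) [CommRing k] (n : ℕ) (c : ℕ → ℕ) (d : ℕ) :
    MonoidAlgebra k (Equiv.Perm (Fin d)) :=
  ∑ g ∈ Finset.univ.filter fun g => g ∈ young n c d,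
    ((Equiv.Perm.sign g : ℤ) : k) • MonoidAlgebra.of k (Equiv.Perm (Fin d)) g

/-!
Statement 19 (James' lemma): Let `F` be a field, `λ ∈ P(d)` and `μ ∈ Λ(d)`.  Then
`x_μ · F𝔖_d · y_λ = 0` unless `μ ⊴ λ'` in the dominance order, and
`x_{λ'} · F𝔖_d · y_λ` is one-dimensional.
-/

/-! ### Auxiliary lemmas -/

section Aux

lemma psum_mono (c : ℕ → ℕ) : Monotone (psum c) := fun _ _ hab =>
  Finset.sum_le_sum_of_subset (Finset.range_subset_range.mpr hab)

lemma psum_succ (c : ℕ → ℕ) (s : ℕ) : psum c (s + 1) = psum c s + c s :=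
  Finset.sum_range_succ c s

lemma psum_eq_of_ge {n : ℕ} {c : ℕ → ℕ} {d : ℕ} (h : IsComposition n c d) {t : ℕ}
    (ht : n ≤ t) : psum c t = d := by
  have h1 : psum c n + ∑ s ∈ Finset.Ico n t, c s = psum c t := by
    rw [psum, psum, Finset.range_eq_Ico, Finset.range_eq_Ico]
    exact Finset.sum_Ico_consecutive c (Nat.zero_le n) ht
  rw [← h1, Finset.sum_eq_zero fun s hs => h.1 s (Finset.mem_Ico.mp hs).1, add_zero, h.2]

lemma psum_le {n : ℕ} {c : ℕ → ℕ} {d : ℕ} (h : IsComposition n c d) (t : ℕ) :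
    psum c t ≤ d := by
  rcases le_or_gt t n with h' | h'
  · rw [← h.2]; exact psum_mono c h'
  · rw [psum_eq_of_ge h h'.le]

lemma colorOf_lt_iff {n : ℕ} {c : ℕ → ℕ} {d : ℕ} (h : IsComposition n c d) {i : ℕ}
    (hi : i < d) (t : ℕ) : colorOf n c i < t ↔ i < psum c t := by
  constructor
  · intro hlt
    by_contra hps
    push_neg at hps
    have htn : t ≤ n := by
      by_contra h'
      push_neg at h'
      rw [psum_eq_of_ge h h'.le] at hps
      omega
    have hsub : Finset.range t ⊆ (Finset.range n).filter fun s => psum c (s + 1) ≤ i := by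
      intro s hs
      rw [Finset.mem_range] at hs
      refine Finset.mem_filter.mpr ⟨Finset.mem_range.mpr (lt_of_lt_of_le hs htn), ?_⟩
      exact le_trans (psum_mono c (by omega)) hps
    have hcard := Finset.card_le_card hsub
    rw [Finset.card_range] at hcard
    unfold colorOf at hlt
    omega
  · intro hps
    rcases Nat.eq_zero_or_pos t with rfl | ht
    · simp [psum] at hps
    have hsub : ((Finset.range n).filter fun s => psum c (s + 1) ≤ i) ⊆
        Finset.range (t - 1) := by
      intro s hs
      rw [Finset.mem_filter] at hs
      rw [Finset.mem_range]
      by_contra h'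
      push_neg at h'
      have : psum c t ≤ psum c (s + 1) := psum_mono c (by omega)
      omega
    have hcard := Finset.card_le_card hsub
    rw [Finset.card_range] at hcard
    unfold colorOf
    omega

lemma colorOf_eq_iff {n : ℕ} {c : ℕ → ℕ} {d : ℕ} (h : IsComposition n c d) {i : ℕ}
    (hi : i < d) (t : ℕ) : colorOf n c i = t ↔ psum c t ≤ i ∧ i < psum c (t + 1) := by
  have h1 := colorOf_lt_iff h hi t
  have h2 := colorOf_lt_iff h hi (t + 1)
  omega

lemma colorOf_lt_n {n : ℕ} {c : ℕ → ℕ} {d : ℕ} (h : IsComposition n c d) {i : ℕ}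
    (hi : i < d) : colorOf n c i < n :=
  (colorOf_lt_iff h hi n).mpr (by rw [h.2]; exact hi)

lemma colorOf_self {n : ℕ} {c : ℕ → ℕ} {d : ℕ} (h : IsComposition n c d) {i : ℕ}
    (hi : i < d) : psum c (colorOf n c i) ≤ i ∧ i < psum c (colorOf n c i + 1) :=
  (colorOf_eq_iff h hi _).mp rfl

lemma card_filter_lt (d m : ℕ) (hm : m ≤ d) :
    ((Finset.univ : Finset (Fin d)).filter fun i : Fin d => (i : ℕ) < m).card = m := by
  have h := Finset.card_bij'
    (s := (Finset.univ : Finset (Fin d)).filter fun i : Fin d => (i : ℕ) < m)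
    (t := Finset.range m) (fun i _ => (i : ℕ))
    (fun j hj => (⟨j, lt_of_lt_of_le (Finset.mem_range.mp hj) hm⟩ : Fin d))
    (fun a ha => Finset.mem_range.mpr (Finset.mem_filter.mp ha).2)
    (fun a ha => Finset.mem_filter.mpr ⟨Finset.mem_univ _, Finset.mem_range.mp ha⟩)
    (fun a _ => rfl) (fun a _ => rfl)
  rw [h, Finset.card_range]

lemma card_color_lt {n : ℕ} {c : ℕ → ℕ} {d : ℕ} (h : IsComposition n c d) (t : ℕ) :
    ((Finset.univ : Finset (Fin d)).filter fun i : Fin d => colorOf n c (i : ℕ) < t).card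
      = psum c t := by
  rw [Finset.filter_congr (fun (i : Fin d) _ => colorOf_lt_iff h i.isLt t)]
  exact card_filter_lt d (psum c t) (psum_le h t)

lemma card_color_eq {n : ℕ} {c : ℕ → ℕ} {d : ℕ} (h : IsComposition n c d) (s : ℕ) :
    ((Finset.univ : Finset (Fin d)).filter fun i : Fin d => colorOf n c (i : ℕ) = s).card
      = c s := by
  have hsplit : ((Finset.univ : Finset (Fin d)).filter fun i : Fin d => colorOf n c (i : ℕ) = s)
      = ((Finset.univ : Finset (Fin d)).filter fun i : Fin d => colorOf n c (i : ℕ) < s + 1) \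
        ((Finset.univ : Finset (Fin d)).filter fun i : Fin d => colorOf n c (i : ℕ) < s) := by
    ext i
    simp only [Finset.mem_filter, Finset.mem_sdiff, Finset.mem_univ, true_and]
    omega
  have hsub : ((Finset.univ : Finset (Fin d)).filter fun i : Fin d => colorOf n c (i : ℕ) < s)
      ⊆ ((Finset.univ : Finset (Fin d)).filter fun i : Fin d => colorOf n c (i : ℕ) < s + 1) := by
    intro i hi
    simp only [Finset.mem_filter, Finset.mem_univ, true_and] at *
    omega
  rw [hsplit, Finset.card_sdiff_of_subset hsub, card_color_lt h, card_color_lt h, psum_succ]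
  omega

lemma psum_transp (n : ℕ) (c : ℕ → ℕ) (t : ℕ) :
    psum (transp n c) t = ∑ r ∈ Finset.range n, min (c r) t := by
  unfold psum transp
  simp only [Finset.card_filter]
  rw [Finset.sum_comm]
  refine Finset.sum_congr rfl fun r _ => ?_
  rw [← Finset.card_filter]
  have : (Finset.range t).filter (fun i => i < c r) = Finset.range (min (c r) t) := by
    ext i
    simp only [Finset.mem_filter, Finset.mem_range]
    omega
  rw [this, Finset.card_range]

lemma c_le_d {n : ℕ} {c : ℕ → ℕ} {d : ℕ} (h : IsComposition n c d) {r : ℕ} (hr : r < n) :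
    c r ≤ d := by
  rw [← h.2]
  exact Finset.single_le_sum (fun _ _ => Nat.zero_le _) (Finset.mem_range.mpr hr)

lemma transp_comp {n : ℕ} {c : ℕ → ℕ} {d : ℕ} (h : IsPartitionC n c d) :
    IsComposition d (transp n c) d := by
  constructor
  · intro s hs
    unfold transp
    rw [Finset.card_eq_zero, Finset.filter_eq_empty_iff]
    intro r hr
    have := c_le_d h.1 (Finset.mem_range.mp hr)
    omega
  · rw [psum_transp]
    have he : ∀ r ∈ Finset.range n, min (c r) d = c r := fun r hr => by
      have := c_le_d h.1 (Finset.mem_range.mp hr); omega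
    rw [Finset.sum_congr rfl he]
    exact h.1.2

lemma lt_transp_of {n : ℕ} {c : ℕ → ℕ} {d : ℕ} (h : IsPartitionC n c d) {s k : ℕ}
    (hs : s < n) (hk : k < c s) : s < transp n c k := by
  unfold transp
  have hsub : Finset.range (s + 1) ⊆ (Finset.range n).filter fun r => k < c r := by
    intro r hr
    rw [Finset.mem_range] at hr
    exact Finset.mem_filter.mpr ⟨Finset.mem_range.mpr (by omega),
      lt_of_lt_of_le hk (h.2 r s (by omega))⟩
  have := Finset.card_le_card hsub
  rw [Finset.card_range] at this
  omega

/-! ### The canonical permutation `w` -/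

def wfun (n : ℕ) (c : ℕ → ℕ) (d : ℕ) (p : ℕ) : ℕ :=
  psum (transp n c) (p - psum c (colorOf n c p)) + colorOf n c p

lemma row_col {n : ℕ} {c : ℕ → ℕ} {d : ℕ} (hc : IsPartitionC n c d) {p : ℕ} (hp : p < d) :
    psum c (colorOf n c p) ≤ p ∧ p - psum c (colorOf n c p) < c (colorOf n c p) ∧
      colorOf n c p < n := by
  obtain ⟨h1, h2⟩ := colorOf_self hc.1 hp
  rw [psum_succ] at h2
  exact ⟨h1, by omega, colorOf_lt_n hc.1 hp⟩

lemma wfun_facts {n : ℕ} {c : ℕ → ℕ} {d : ℕ} (hc : IsPartitionC n c d) {p : ℕ}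
    (hp : p < d) : wfun n c d p < d ∧
      psum (transp n c) (p - psum c (colorOf n c p)) ≤ wfun n c d p ∧
      wfun n c d p < psum (transp n c) (p - psum c (colorOf n c p) + 1) := by
  obtain ⟨h1, hkc, hsn⟩ := row_col hc hp
  have hw : wfun n c d p
      = psum (transp n c) (p - psum c (colorOf n c p)) + colorOf n c p := rfl
  have hsl : colorOf n c p < transp n c (p - psum c (colorOf n c p)) :=
    lt_transp_of hc hsn hkc
  have hps : psum (transp n c) (p - psum c (colorOf n c p) + 1)
      = psum (transp n c) (p - psum c (colorOf n c p))
        + transp n c (p - psum c (colorOf n c p)) := psum_succ _ _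
  have hcd : c (colorOf n c p) ≤ d := c_le_d hc.1 hsn
  have h4 : psum (transp n c) (p - psum c (colorOf n c p) + 1) ≤ psum (transp n c) d :=
    psum_mono _ (by omega)
  rw [(transp_comp hc).2] at h4
  refine ⟨by omega, by omega, by omega⟩

lemma wfun_lt {n : ℕ} {c : ℕ → ℕ} {d : ℕ} (hc : IsPartitionC n c d) {p : ℕ} (hp : p < d) :
    wfun n c d p < d := (wfun_facts hc hp).1

lemma colorOf_wfun {n : ℕ} {c : ℕ → ℕ} {d : ℕ} (hc : IsPartitionC n c d) {p : ℕ}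
    (hp : p < d) :
    colorOf d (transp n c) (wfun n c d p) = p - psum c (colorOf n c p) := by
  rw [colorOf_eq_iff (transp_comp hc) (wfun_lt hc hp)]
  exact ⟨(wfun_facts hc hp).2.1, (wfun_facts hc hp).2.2⟩

lemma wfun_inj {n : ℕ} {c : ℕ → ℕ} {d : ℕ} (hc : IsPartitionC n c d) {p q : ℕ}
    (hp : p < d) (hq : q < d) (h : wfun n c d p = wfun n c d q) : p = q := by
  have h1 := colorOf_wfun hc hp
  have h2 := colorOf_wfun hc hq
  rw [h, h2] at h1
  replace h1 := h1.symm
  have hp' := row_col hc hp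
  have hq' := row_col hc hq
  have hweq : wfun n c d p = wfun n c d q := h
  unfold wfun at hweq
  rw [show p - psum c (colorOf n c p) = q - psum c (colorOf n c q) from h1] at hweq
  have hs : colorOf n c p = colorOf n c q := by omega
  rw [hs] at h1 hp'
  omega

def wperm {n : ℕ} {c : ℕ → ℕ} {d : ℕ} (hc : IsPartitionC n c d) : Equiv.Perm (Fin d) :=
  Equiv.ofBijective (fun p => ⟨wfun n c d (p : ℕ), wfun_lt hc p.isLt⟩)
    (Finite.injective_iff_bijective.mp fun p q h =>
      Fin.ext (wfun_inj hc p.isLt q.isLt (congrArg Fin.val h)))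

lemma wperm_apply {n : ℕ} {c : ℕ → ℕ} {d : ℕ} (hc : IsPartitionC n c d) (p : Fin d) :
    ((wperm hc p : Fin d) : ℕ) = wfun n c d (p : ℕ) := rfl

lemma colorOf_wperm {n : ℕ} {c : ℕ → ℕ} {d : ℕ} (hc : IsPartitionC n c d) (p : Fin d) :
    colorOf d (transp n c) ((wperm hc p : Fin d) : ℕ)
      = (p : ℕ) - psum c (colorOf n c (p : ℕ)) := by
  rw [wperm_apply]
  exact colorOf_wfun hc p.isLt

lemma wperm_noBad {n : ℕ} {c : ℕ → ℕ} {d : ℕ} (hc : IsPartitionC n c d) {p q : Fin d}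
    (hne : p ≠ q) (hrow : colorOf n c (p : ℕ) = colorOf n c (q : ℕ)) :
    colorOf d (transp n c) ((wperm hc p : Fin d) : ℕ)
      ≠ colorOf d (transp n c) ((wperm hc q : Fin d) : ℕ) := by
  rw [colorOf_wperm, colorOf_wperm]
  intro h
  apply hne
  have hp' := row_col hc p.isLt
  have hq' := row_col hc q.isLt
  rw [hrow] at h hp'
  exact Fin.ext (by omega)

end Aux
section Algebra

variable {F : Type} [Field F] {d : ℕ}

lemma xEl_mul_of {n : ℕ} {c : ℕ → ℕ} {h : Equiv.Perm (Fin d)} (hh : h ∈ young n c d) :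
    xEl F n c d * MonoidAlgebra.of F (Equiv.Perm (Fin d)) h = xEl F n c d := by
  unfold xEl
  rw [Finset.sum_mul]
  refine Finset.sum_bij' (fun a _ => a * h) (fun a _ => a * h⁻¹) ?_ ?_ ?_ ?_ ?_
  · intro a ha
    simp only [Finset.mem_filter, Finset.mem_univ, true_and] at ha ⊢
    exact mul_mem ha hh
  · intro a ha
    simp only [Finset.mem_filter, Finset.mem_univ, true_and] at ha ⊢
    exact mul_mem ha (inv_mem hh)
  · intro a _
    simp [mul_assoc]
  · intro a _
    simp [mul_assoc]
  · intro a _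
    rw [← map_mul]

lemma of_mul_yEl {n : ℕ} {c : ℕ → ℕ} {h : Equiv.Perm (Fin d)} (hh : h ∈ young n c d) :
    MonoidAlgebra.of F (Equiv.Perm (Fin d)) h * yEl F n c d
      = ((Equiv.Perm.sign h : ℤ) : F) • yEl F n c d := by
  unfold yEl
  rw [Finset.mul_sum, Finset.smul_sum]
  refine Finset.sum_bij' (fun b _ => h * b) (fun b _ => h⁻¹ * b) ?_ ?_ ?_ ?_ ?_
  · intro b hb
    simp only [Finset.mem_filter, Finset.mem_univ, true_and] at hb ⊢
    exact mul_mem hh hb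
  · intro b hb
    simp only [Finset.mem_filter, Finset.mem_univ, true_and] at hb ⊢
    exact mul_mem (inv_mem hh) hb
  · intro b _
    simp [← mul_assoc]
  · intro b _
    simp [← mul_assoc]
  · intro b _
    have hs : Equiv.Perm.sign h * Equiv.Perm.sign (h * b) = Equiv.Perm.sign b := by
      rw [map_mul, ← mul_assoc, Int.units_mul_self, one_mul]
    rw [mul_smul_comm, ← map_mul, smul_smul, ← Int.cast_mul, ← Units.val_mul, hs]

lemma key_zero {nμ n : ℕ} {cμ c : ℕ → ℕ} (g : Equiv.Perm (Fin d)) {i j : Fin d}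
    (hij : i ≠ j) (h1 : colorOf nμ cμ (i : ℕ) = colorOf nμ cμ (j : ℕ))
    (h2 : colorOf n c ((g⁻¹ i : Fin d) : ℕ) = colorOf n c ((g⁻¹ j : Fin d) : ℕ)) :
    xEl F nμ cμ d * MonoidAlgebra.of F (Equiv.Perm (Fin d)) g * yEl F n c d = 0 := by
  have ht : Equiv.swap i j ∈ young nμ cμ d := by
    intro p
    rcases eq_or_ne p i with rfl | hpi
    · rw [Equiv.swap_apply_left]; exact h1.symm
    rcases eq_or_ne p j with rfl | hpj
    · rw [Equiv.swap_apply_right]; exact h1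
    · rw [Equiv.swap_apply_of_ne_of_ne hpi hpj]
  have hu : g⁻¹ * Equiv.swap i j * g ∈ young n c d := by
    intro p
    have e : (g⁻¹ * Equiv.swap i j * g) p = g⁻¹ (Equiv.swap i j (g p)) := rfl
    rw [e]
    rcases eq_or_ne (g p) i with hgi | hgi
    · have hp : g⁻¹ i = p := by rw [← hgi]; simp
      rw [hgi, Equiv.swap_apply_left, ← h2, hp]
    rcases eq_or_ne (g p) j with hgj | hgj
    · have hp : g⁻¹ j = p := by rw [← hgj]; simp
      rw [hgj, Equiv.swap_apply_right, h2, hp]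
    · rw [Equiv.swap_apply_of_ne_of_ne hgi hgj]
      simp
  have hsu : ((Equiv.Perm.sign (g⁻¹ * Equiv.swap i j * g) : ℤ) : F) = -1 := by
    have hs1 : Equiv.Perm.sign (g⁻¹ * Equiv.swap i j * g)
        = Equiv.Perm.sign (Equiv.swap i j) := by
      rw [map_mul, map_mul, map_inv,
        mul_comm ((Equiv.Perm.sign g)⁻¹) (Equiv.Perm.sign (Equiv.swap i j)),
        mul_assoc, inv_mul_cancel, mul_one]
    rw [hs1, Equiv.Perm.sign_swap hij]
    simp
  unfold xEl
  rw [Finset.sum_mul, Finset.sum_mul]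
  refine Finset.sum_involution (fun a _ => a * Equiv.swap i j) ?_ ?_ ?_ ?_
  · intro a _
    have key : MonoidAlgebra.of F (Equiv.Perm (Fin d)) (a * Equiv.swap i j)
        * MonoidAlgebra.of F (Equiv.Perm (Fin d)) g * yEl F n c d
        = -(MonoidAlgebra.of F (Equiv.Perm (Fin d)) a
            * MonoidAlgebra.of F (Equiv.Perm (Fin d)) g * yEl F n c d) := by
      have e1 : a * Equiv.swap i j * g = (a * g) * (g⁻¹ * Equiv.swap i j * g) := by
        group
      simp only [← map_mul]
      rw [e1, map_mul, mul_assoc, of_mul_yEl hu, hsu, mul_smul_comm, neg_one_smul]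
    rw [key]
    exact add_neg_cancel _
  · intro a _ _ heq
    apply hij
    have h1' : Equiv.swap i j = 1 :=
      mul_left_cancel (a := a) (by rw [mul_one]; exact heq)
    have h2' : j = i := by simpa using congrArg (fun e : Equiv.Perm (Fin d) => e i) h1'
    exact h2'.symm
  · intro a ha
    simp only [Finset.mem_filter, Finset.mem_univ, true_and] at ha ⊢
    exact mul_mem ha ht
  · intro a _
    show a * Equiv.swap i j * Equiv.swap i j = a
    rw [mul_assoc, Equiv.swap_mul_self, mul_one]

end Algebra
section Counting

variable {d : ℕ}

lemma counting {nμ n : ℕ} {cμ c : ℕ → ℕ} (hμ : IsComposition nμ cμ d)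
    (hc : IsPartitionC n c d) (h : Equiv.Perm (Fin d))
    (hgood : ∀ i j : Fin d, i ≠ j → colorOf nμ cμ (i : ℕ) = colorOf nμ cμ (j : ℕ) →
      colorOf n c ((h i : Fin d) : ℕ) ≠ colorOf n c ((h j : Fin d) : ℕ))
    (t : ℕ) :
    psum cμ t ≤ psum (transp n c) t ∧
      (psum (transp n c) t ≤ psum cμ t → ∀ s ∈ Finset.range n,
        ((((Finset.univ : Finset (Fin d)).filter
            fun i : Fin d => colorOf nμ cμ (i : ℕ) < t).image h).filter
            fun i : Fin d => colorOf n c (i : ℕ) = s).card = min (c s) t) := by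
  set A := (Finset.univ : Finset (Fin d)).filter
    fun i : Fin d => colorOf nμ cμ (i : ℕ) < t with hA
  set B := A.image h with hB
  have hBA : B.card = psum cμ t := by
    rw [hB, Finset.card_image_of_injective A h.injective, hA, card_color_lt hμ]
  have hfib : B.card = ∑ s ∈ Finset.range n,
      (B.filter fun i : Fin d => colorOf n c (i : ℕ) = s).card :=
    Finset.card_eq_sum_card_fiberwise
      (fun i _ => Finset.mem_range.mpr (colorOf_lt_n hc.1 i.isLt))
  have hle : ∀ s ∈ Finset.range n,
      (B.filter fun i : Fin d => colorOf n c (i : ℕ) = s).card ≤ min (c s) t := by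
    intro s _
    refine le_min ?_ ?_
    · calc (B.filter fun i : Fin d => colorOf n c (i : ℕ) = s).card
          ≤ ((Finset.univ : Finset (Fin d)).filter
              fun i : Fin d => colorOf n c (i : ℕ) = s).card :=
            Finset.card_le_card (fun i hi => Finset.mem_filter.mpr
              ⟨Finset.mem_univ _, (Finset.mem_filter.mp hi).2⟩)
        _ = c s := card_color_eq hc.1 s
    · rw [← Finset.card_range t]
      refine Finset.card_le_card_of_injOn
        (fun i => colorOf nμ cμ ((h⁻¹ i : Fin d) : ℕ)) ?_ ?_
      · intro i hi
        obtain ⟨hiB, _⟩ := Finset.mem_filter.mp hi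
        obtain ⟨i0, hi0A, hi0⟩ := Finset.mem_image.mp hiB
        rw [Finset.mem_coe, Finset.mem_range, ← hi0]
        simp only [Equiv.Perm.coe_inv, Equiv.symm_apply_apply]
        exact (Finset.mem_filter.mp hi0A).2
      · intro i hi j hj hij2
        by_contra hne
        have hinv : (h⁻¹ i : Fin d) ≠ h⁻¹ j := by
          intro e
          exact hne (by simpa using congrArg h e)
        have hcon := hgood _ _ hinv hij2
        simp only [Equiv.Perm.coe_inv, Equiv.apply_symm_apply] at hcon
        rw [Finset.mem_coe] at hi hj
        have hi2 := (Finset.mem_filter.mp hi).2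
        have hj2 := (Finset.mem_filter.mp hj).2
        rw [hi2, hj2] at hcon
        exact hcon rfl
  have hchain : psum cμ t = ∑ s ∈ Finset.range n,
      (B.filter fun i : Fin d => colorOf n c (i : ℕ) = s).card := by
    rw [← hfib, hBA]
  constructor
  · calc psum cμ t
        = ∑ s ∈ Finset.range n,
          (B.filter fun i : Fin d => colorOf n c (i : ℕ) = s).card := hchain
      _ ≤ ∑ s ∈ Finset.range n, min (c s) t := Finset.sum_le_sum hle
      _ = psum (transp n c) t := (psum_transp n c t).symm
  · intro hgt
    have hsum : ∑ s ∈ Finset.range n,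
        (B.filter fun i : Fin d => colorOf n c (i : ℕ) = s).card
        = ∑ s ∈ Finset.range n, min (c s) t := by
      have hub : ∑ s ∈ Finset.range n,
          (B.filter fun i : Fin d => colorOf n c (i : ℕ) = s).card
          ≤ ∑ s ∈ Finset.range n, min (c s) t := Finset.sum_le_sum hle
      have hlb : ∑ s ∈ Finset.range n, min (c s) t
          ≤ ∑ s ∈ Finset.range n,
            (B.filter fun i : Fin d => colorOf n c (i : ℕ) = s).card := by
        rw [← hchain, ← psum_transp n c t]
        exact hgt
      omega
    exact (Finset.sum_eq_sum_iff_of_le hle).mp hsum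

lemma rigid_block {n : ℕ} {c : ℕ → ℕ} (hc : IsPartitionC n c d) (h : Equiv.Perm (Fin d))
    (hgood : ∀ i j : Fin d, i ≠ j →
      colorOf d (transp n c) (i : ℕ) = colorOf d (transp n c) (j : ℕ) →
      colorOf n c ((h i : Fin d) : ℕ) ≠ colorOf n c ((h j : Fin d) : ℕ))
    (p : Fin d) :
    colorOf d (transp n c) ((h⁻¹ p : Fin d) : ℕ) < c (colorOf n c (p : ℕ)) := by
  set s := colorOf n c (p : ℕ) with hs
  have hsn : s < n := colorOf_lt_n hc.1 p.isLt
  set t := c s with htdef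
  have hcnt := counting (transp_comp hc) hc h hgood t
  have hfib := hcnt.2 (le_refl _) s (Finset.mem_range.mpr hsn)
  -- the fiber over s equals the whole colour class of s
  set B := (((Finset.univ : Finset (Fin d)).filter
      fun i : Fin d => colorOf d (transp n c) (i : ℕ) < t).image h) with hB
  have hsub : (B.filter fun i : Fin d => colorOf n c (i : ℕ) = s)
      ⊆ (Finset.univ : Finset (Fin d)).filter fun i : Fin d => colorOf n c (i : ℕ) = s :=
    fun i hi => Finset.mem_filter.mpr ⟨Finset.mem_univ _, (Finset.mem_filter.mp hi).2⟩
  have hcard : ((Finset.univ : Finset (Fin d)).filter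
      fun i : Fin d => colorOf n c (i : ℕ) = s).card ≤
      (B.filter fun i : Fin d => colorOf n c (i : ℕ) = s).card := by
    rw [hfib, card_color_eq hc.1 s]
    omega
  have heqset := Finset.eq_of_subset_of_card_le hsub hcard
  have hp : p ∈ (B.filter fun i : Fin d => colorOf n c (i : ℕ) = s) := by
    rw [heqset]
    exact Finset.mem_filter.mpr ⟨Finset.mem_univ _, rfl⟩
  obtain ⟨hpB, _⟩ := Finset.mem_filter.mp hp
  obtain ⟨p0, hp0A, hp0⟩ := Finset.mem_image.mp hpB
  have : (h⁻¹ p : Fin d) = p0 := by rw [← hp0]; simp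
  rw [this]
  exact (Finset.mem_filter.mp hp0A).2

end Counting
section Decomp

variable {d n : ℕ} {c : ℕ → ℕ}

lemma decomp (hc : IsPartitionC n c d) (g : Equiv.Perm (Fin d))
    (hgood : ∀ i j : Fin d, i ≠ j →
      colorOf d (transp n c) (i : ℕ) = colorOf d (transp n c) (j : ℕ) →
      colorOf n c ((g⁻¹ i : Fin d) : ℕ) ≠ colorOf n c ((g⁻¹ j : Fin d) : ℕ)) :
    ∃ a ∈ young d (transp n c) d, ∃ b ∈ young n c d, g = a * wperm hc * b := by
  have halpha : ∀ p : Fin d,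
      colorOf d (transp n c) ((g p : Fin d) : ℕ) < c (colorOf n c (p : ℕ)) := by
    intro p
    have h := rigid_block hc g⁻¹ hgood p
    rwa [inv_inv] at h
  have hbeta : ∀ p q : Fin d, p ≠ q → colorOf n c (p : ℕ) = colorOf n c (q : ℕ) →
      colorOf d (transp n c) ((g p : Fin d) : ℕ)
        ≠ colorOf d (transp n c) ((g q : Fin d) : ℕ) := by
    intro p q hne hrow hblk
    have hgne : g p ≠ g q := fun e => hne (g.injective e)
    have h := hgood (g p) (g q) hgne hblk
    simp only [Equiv.Perm.coe_inv, Equiv.symm_apply_apply] at h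
    exact h hrow
  have hblt : ∀ p : Fin d,
      psum c (colorOf n c (p : ℕ)) + colorOf d (transp n c) ((g p : Fin d) : ℕ) < d := by
    intro p
    have h1 := halpha p
    have h2 := psum_succ c (colorOf n c (p : ℕ))
    have h3 : psum c (colorOf n c (p : ℕ) + 1) ≤ d := psum_le hc.1 _
    omega
  have hbcolor : ∀ p : Fin d, colorOf n c
      ((psum c (colorOf n c (p : ℕ)) + colorOf d (transp n c) ((g p : Fin d) : ℕ)))
      = colorOf n c (p : ℕ) := by
    intro p
    rw [colorOf_eq_iff hc.1 (hblt p)]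
    refine ⟨Nat.le_add_right _ _, ?_⟩
    rw [psum_succ]
    have := halpha p
    omega
  have hbinj : Function.Injective (fun p : Fin d =>
      (⟨psum c (colorOf n c (p : ℕ)) + colorOf d (transp n c) ((g p : Fin d) : ℕ),
        hblt p⟩ : Fin d)) := by
    intro p q hpq
    have hv : psum c (colorOf n c (p : ℕ)) + colorOf d (transp n c) ((g p : Fin d) : ℕ)
        = psum c (colorOf n c (q : ℕ)) + colorOf d (transp n c) ((g q : Fin d) : ℕ) :=
      congrArg Fin.val hpq
    have hs : colorOf n c (p : ℕ) = colorOf n c (q : ℕ) := by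
      have h1 := hbcolor p
      have h2 := hbcolor q
      rw [hv] at h1
      rw [← h1, h2]
    by_contra hne
    rw [hs] at hv
    exact hbeta p q hne hs (by omega)
  set bperm := Equiv.ofBijective _ (Finite.injective_iff_bijective.mp hbinj) with hbperm
  have hbapp : ∀ p : Fin d, ((bperm p : Fin d) : ℕ)
      = psum c (colorOf n c (p : ℕ)) + colorOf d (transp n c) ((g p : Fin d) : ℕ) :=
    fun p => rfl
  have hbmem : bperm ∈ young n c d := by
    intro p
    rw [hbapp p]
    exact hbcolor p
  refine ⟨g * bperm⁻¹ * (wperm hc)⁻¹, ?_, bperm, hbmem, by group⟩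
  intro q
  have haq : (g * bperm⁻¹ * (wperm hc)⁻¹) q = g (bperm⁻¹ ((wperm hc)⁻¹ q)) := rfl
  have hq : q = wperm hc (bperm (bperm⁻¹ ((wperm hc)⁻¹ q))) := by simp
  rw [haq]
  conv_rhs => rw [hq]
  set p := bperm⁻¹ ((wperm hc)⁻¹ q)
  rw [colorOf_wperm hc (bperm p), hbapp p, hbcolor p]
  omega

lemma wperm_rigid (hc : IsPartitionC n c d) {a b : Equiv.Perm (Fin d)}
    (ha : a ∈ young d (transp n c) d) (hb : b ∈ young n c d)
    (hab : a * wperm hc * b = wperm hc) : a = 1 ∧ b = 1 := by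
  have hb1 : b = 1 := by
    apply Equiv.ext
    intro p
    by_contra hne
    simp only [Equiv.Perm.one_apply] at hne
    have happ : a (wperm hc (b p)) = wperm hc p := by
      have h := congrArg (fun e : Equiv.Perm (Fin d) => e p) hab
      simpa [Equiv.Perm.mul_apply] using h
    have hcol : colorOf d (transp n c) ((wperm hc (b p) : Fin d) : ℕ)
        = colorOf d (transp n c) ((wperm hc p : Fin d) : ℕ) := by
      have h := ha (wperm hc (b p))
      rw [happ] at h
      exact h.symm
    have hrow := hb p
    exact wperm_noBad hc hne hrow hcol
  rw [hb1, mul_one] at hab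
  exact ⟨mul_right_cancel (b := wperm hc) (by rw [hab, one_mul]), hb1⟩

end Decomp

section Coeff

variable {F : Type} [Field F] {d : ℕ}

lemma sandwich {nμ n : ℕ} {cμ c : ℕ → ℕ} {a' b' : Equiv.Perm (Fin d)}
    (ha : a' ∈ young nμ cμ d) (hb : b' ∈ young n c d) (w : Equiv.Perm (Fin d)) :
    xEl F nμ cμ d * MonoidAlgebra.of F (Equiv.Perm (Fin d)) (a' * w * b') * yEl F n c d
      = ((Equiv.Perm.sign b' : ℤ) : F) •
        (xEl F nμ cμ d * MonoidAlgebra.of F (Equiv.Perm (Fin d)) w * yEl F n c d) := by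
  simp only [map_mul, mul_assoc]
  rw [← mul_assoc (xEl F nμ cμ d) (MonoidAlgebra.of F (Equiv.Perm (Fin d)) a'),
    xEl_mul_of ha, of_mul_yEl hb, mul_smul_comm, mul_smul_comm]

lemma expand {nμ n : ℕ} {cμ c : ℕ → ℕ} (g : Equiv.Perm (Fin d)) :
    xEl F nμ cμ d * MonoidAlgebra.of F (Equiv.Perm (Fin d)) g * yEl F n c d
      = ∑ a ∈ Finset.univ.filter (fun a => a ∈ young nμ cμ d),
          ∑ b ∈ Finset.univ.filter (fun b => b ∈ young n c d),
            ((Equiv.Perm.sign b : ℤ) : F) •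
              MonoidAlgebra.of F (Equiv.Perm (Fin d)) (a * g * b) := by
  unfold xEl yEl
  rw [Finset.sum_mul, Finset.sum_mul_sum]
  refine Finset.sum_congr rfl fun a _ => Finset.sum_congr rfl fun b _ => ?_
  rw [mul_smul_comm, ← map_mul, ← map_mul]

lemma coeff_one {n : ℕ} {c : ℕ → ℕ} (hc : IsPartitionC n c d) :
    xEl F d (transp n c) d * MonoidAlgebra.of F (Equiv.Perm (Fin d)) (wperm hc)
      * yEl F n c d ≠ 0 := by
  intro h0
  have h1 : ∀ a : Equiv.Perm (Fin d),
      a ∈ Finset.univ.filter (fun a => a ∈ young d (transp n c) d) →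
      ((∑ b ∈ Finset.univ.filter (fun b => b ∈ young n c d),
        ((Equiv.Perm.sign b : ℤ) : F) •
          MonoidAlgebra.of F (Equiv.Perm (Fin d)) (a * wperm hc * b)).coeff (wperm hc) : F)
      = if a = 1 then 1 else 0 := by
    intro a ha
    rw [MonoidAlgebra.coeff_sum, Finsupp.finset_sum_apply]
    by_cases ha1 : a = 1
    · subst ha1
      rw [if_pos rfl]
      refine (Finset.sum_eq_single_of_mem (1 : Equiv.Perm (Fin d))
        (Finset.mem_filter.mpr ⟨Finset.mem_univ _, one_mem _⟩) ?_).trans ?_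
      · intro b hb hbne
        rw [MonoidAlgebra.coeff_smul_apply, MonoidAlgebra.of_apply, MonoidAlgebra.coeff_single,
          Finsupp.single_apply, if_neg,
          smul_zero]
        intro he
        exact hbne (wperm_rigid hc (one_mem _) (Finset.mem_filter.mp hb).2 he).2
      · simp [MonoidAlgebra.of_apply, Finsupp.single_apply]
    · rw [if_neg ha1, Finset.sum_eq_zero]
      intro b hb
      rw [MonoidAlgebra.coeff_smul_apply, MonoidAlgebra.of_apply, MonoidAlgebra.coeff_single,
          Finsupp.single_apply, if_neg,
        smul_zero]
      intro he
      exact ha1 (wperm_rigid hc (Finset.mem_filter.mp ha).2 (Finset.mem_filter.mp hb).2 he).1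
  have hcoeff : ((xEl F d (transp n c) d
      * MonoidAlgebra.of F (Equiv.Perm (Fin d)) (wperm hc) * yEl F n c d).coeff (wperm hc) : F)
      = 1 := by
    rw [expand, MonoidAlgebra.coeff_sum, Finsupp.finset_sum_apply, Finset.sum_congr rfl h1, Finset.sum_ite_eq',
      if_pos (Finset.mem_filter.mpr ⟨Finset.mem_univ _, one_mem _⟩)]
  rw [h0] at hcoeff
  simp at hcoeff

end Coeff
theorem stmt19 (F : Type) [Field F] (d nμ n : ℕ) (cμ c : ℕ → ℕ)
    (hμ : IsComposition nμ cμ d) (hc : IsPartitionC n c d) :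
    (¬ Dominates cμ (transp n c) →
      ∀ a : MonoidAlgebra F (Equiv.Perm (Fin d)),
        xEl F nμ cμ d * a * yEl F n c d = 0) ∧
    Module.rank F
        ↥(Submodule.span F
          {z : MonoidAlgebra F (Equiv.Perm (Fin d)) |
            ∃ a, z = xEl F d (transp n c) d * a * yEl F n c d}) = 1 := by
  constructor
  · intro hdom a
    have hbad : ∀ g : Equiv.Perm (Fin d), ∃ i j : Fin d, i ≠ j ∧
        colorOf nμ cμ (i : ℕ) = colorOf nμ cμ (j : ℕ) ∧
        colorOf n c ((g⁻¹ i : Fin d) : ℕ) = colorOf n c ((g⁻¹ j : Fin d) : ℕ) := by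
      intro g
      by_contra hng
      push_neg at hng
      apply hdom
      intro t
      exact (counting hμ hc g⁻¹ (fun i j hij hcol => hng i j hij hcol) t).1
    refine MonoidAlgebra.induction_on
      (motive := fun a => xEl F nμ cμ d * a * yEl F n c d = 0) a ?_ ?_ ?_
    · intro g
      obtain ⟨i, j, hij, h1', h2'⟩ := hbad g
      exact key_zero g hij h1' h2'
    · intro f g hf hg
      rw [mul_add, add_mul, hf, hg, add_zero]
    · intro r f hf
      rw [mul_smul_comm, smul_mul_assoc, hf, smul_zero]
  · have hvne : xEl F d (transp n c) d
        * MonoidAlgebra.of F (Equiv.Perm (Fin d)) (wperm hc) * yEl F n c d ≠ 0 :=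
      coeff_one hc
    have hspan : Submodule.span F
        {z : MonoidAlgebra F (Equiv.Perm (Fin d)) |
          ∃ a, z = xEl F d (transp n c) d * a * yEl F n c d}
        = Submodule.span F {xEl F d (transp n c) d
            * MonoidAlgebra.of F (Equiv.Perm (Fin d)) (wperm hc) * yEl F n c d} := by
      apply le_antisymm
      · rw [Submodule.span_le]
        rintro z ⟨a, rfl⟩
        rw [SetLike.mem_coe]
        refine MonoidAlgebra.induction_on
          (motive := fun a => xEl F d (transp n c) d * a * yEl F n c d ∈
            Submodule.span F {xEl F d (transp n c) d
              * MonoidAlgebra.of F (Equiv.Perm (Fin d)) (wperm hc) * yEl F n c d}) a ?_ ?_ ?_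
        · intro g
          by_cases hgood : ∀ i j : Fin d, i ≠ j →
              colorOf d (transp n c) (i : ℕ) = colorOf d (transp n c) (j : ℕ) →
              colorOf n c ((g⁻¹ i : Fin d) : ℕ) ≠ colorOf n c ((g⁻¹ j : Fin d) : ℕ)
          · obtain ⟨a', ha', b', hb', rfl⟩ := decomp hc g hgood
            rw [sandwich ha' hb']
            exact Submodule.smul_mem _ _ (Submodule.mem_span_singleton_self _)
          · push_neg at hgood
            obtain ⟨i, j, hij, hcol, heq⟩ := hgood
            rw [key_zero g hij hcol heq]
            exact Submodule.zero_mem _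
        · intro f g hf hg
          rw [mul_add, add_mul]
          exact Submodule.add_mem _ hf hg
        · intro r f hf
          rw [mul_smul_comm, smul_mul_assoc]
          exact Submodule.smul_mem _ _ hf
      · rw [Submodule.span_le, Set.singleton_subset_iff]
        exact Submodule.subset_span ⟨MonoidAlgebra.of F (Equiv.Perm (Fin d)) (wperm hc), rfl⟩
    rw [hspan]
    exact Module.rank_eq_one_iff_finrank_eq_one.mpr (finrank_span_singleton hvne)
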